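/- Under the ring homomorphism φ : ℚ[t₁, ..., t₂ₙ] → ℚ[t₁, ..., tₙ] determined by t_{2i-1} ↦ t_i and t_{2i} ↦ t_i for 1 ≤ i ≤ n (the 'doubling' substitution), the k-th elementary symmetric polynomial e_k(t₁, ..., t₂ₙ) maps to a symmetric polynomial in t₁, ..., tₙ whose component in the span of e_k(t₁,...,tₙ) is a nonzero multiple of e_k, modulo the subring generated by e₁, ..., e_{k-1}, for each k ≤ n. -/

import Mathlib

open MvPolynomial

/-- The "doubling" substitution `ℚ[t₁,…,t₂ₙ] → ℚ[t₁,…,tₙ]`, sending each variable `t_j`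
to `t_{⌈j/2⌉}`. -/
noncomputable def doublingMap (n : ℕ) :
    MvPolynomial (Fin (2 * n)) ℚ →ₐ[ℚ] MvPolynomial (Fin n) ℚ :=
  aeval fun j : Fin (2 * n) => X (⟨j.val / 2, by omega⟩ : Fin n)

/-- The equivalence `Fin n × Fin 2 ≃ Fin (2 * n)`, `(i, b) ↦ 2 i + b`. -/
def doubleEquiv (n : ℕ) : Fin n × Fin 2 ≃ Fin (2 * n) where
  toFun p := ⟨2 * p.1.val + p.2.val, by omega⟩
  invFun j := (⟨j.val / 2, by omega⟩, ⟨j.val % 2, by omega⟩)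
  left_inv p := by
    obtain ⟨⟨a, ha⟩, ⟨b, hb⟩⟩ := p
    ext <;> simp <;> omega
  right_inv j := by ext; simp; omega

lemma doubling_prod (n : ℕ) :
    (∏ j : Fin (2 * n),
        (Polynomial.X + Polynomial.C (X (⟨j.val / 2, by omega⟩ : Fin n)
          : MvPolynomial (Fin n) ℚ))) =
      (∏ i : Fin n, (Polynomial.X + Polynomial.C (X i : MvPolynomial (Fin n) ℚ))) *
      (∏ i : Fin n, (Polynomial.X + Polynomial.C (X i : MvPolynomial (Fin n) ℚ))) := by
  have h : ∀ p : Fin n × Fin 2,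
      (Polynomial.X + Polynomial.C (X p.1 : MvPolynomial (Fin n) ℚ)) =
      (Polynomial.X + Polynomial.C (X (⟨(doubleEquiv n p).val / 2, by omega⟩ : Fin n)
        : MvPolynomial (Fin n) ℚ)) := by
    intro p
    obtain ⟨⟨a, ha⟩, ⟨b, hb⟩⟩ := p
    have hfin : (⟨a, ha⟩ : Fin n) =
        ⟨((doubleEquiv n) (⟨a, ha⟩, ⟨b, hb⟩)).val / 2, by omega⟩ := by
      apply Fin.ext
      simp [doubleEquiv]
      omega
    exact congrArg (fun i : Fin n =>
      Polynomial.X + Polynomial.C (X i : MvPolynomial (Fin n) ℚ)) hfin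
  rw [← Fintype.prod_equiv (doubleEquiv n) _ _ h, Fintype.prod_prod_type]
  rw [← Finset.prod_mul_distrib]
  refine Finset.prod_congr rfl fun i _ => ?_
  rw [Fin.prod_univ_two]

/-- Under the doubling substitution, the `k`-th elementary symmetric polynomial
`e_k(t₁,…,t₂ₙ)` maps to a nonzero multiple of `e_k(t₁,…,tₙ)` modulo the subring generated
by `e₁,…,e_{k-1}`, for all `1 ≤ k ≤ n`. -/
theorem doubling_esymm (n k : ℕ) (hk1 : 1 ≤ k) (hkn : k ≤ n) :
    ∃ c : ℚ, c ≠ 0 ∧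
      doublingMap n (esymm (Fin (2 * n)) ℚ k) - c • esymm (Fin n) ℚ k ∈
        Algebra.adjoin ℚ {p : MvPolynomial (Fin n) ℚ | ∃ j, 1 ≤ j ∧ j < k ∧ p = esymm (Fin n) ℚ j} := by
  refine ⟨2, by norm_num, ?_⟩
  set A := Algebra.adjoin ℚ
      {p : MvPolynomial (Fin n) ℚ | ∃ j, 1 ≤ j ∧ j < k ∧ p = esymm (Fin n) ℚ j} with hA
  have hmem : ∀ j, 1 ≤ j → j < k → esymm (Fin n) ℚ j ∈ A := fun j h1 h2 =>
    Algebra.subset_adjoin ⟨j, h1, h2, rfl⟩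
  set P : Polynomial (MvPolynomial (Fin n) ℚ) :=
    ∏ i : Fin n, (Polynomial.X + Polynomial.C (X i : MvPolynomial (Fin n) ℚ)) with hP
  have hPdeg : P.natDegree = n := by
    rw [hP, Polynomial.natDegree_prod_of_monic _ _
      (fun i _ => Polynomial.monic_X_add_C _)]
    simp
  have hPcoeff : ∀ a, a ≤ n → P.coeff a = esymm (Fin n) ℚ (n - a) := by
    intro a ha
    have := MvPolynomial.prod_X_add_C_coeff ℚ (Fin n) (k := a) (by simpa using ha)
    simpa using this
  have hPcoeff0 : ∀ a, n < a → P.coeff a = 0 := fun a ha =>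
    Polynomial.coeff_eq_zero_of_natDegree_lt (by omega)
  -- the key identity
  have key : doublingMap n (esymm (Fin (2 * n)) ℚ k) = (P * P).coeff (2 * n - k) := by
    have h1 := MvPolynomial.prod_X_add_C_coeff ℚ (Fin (2 * n)) (k := 2 * n - k)
      (by simp only [Fintype.card_fin]; omega)
    have h2 : Fintype.card (Fin (2 * n)) - (2 * n - k) = k := by
      simp only [Fintype.card_fin]; omega
    rw [h2] at h1
    rw [← h1, ← AlgHom.coe_toRingHom (doublingMap n), ← Polynomial.coeff_map,
      Polynomial.map_prod]
    simp only [Polynomial.map_add, Polynomial.map_X, Polynomial.map_C]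
    have : ∀ j : Fin (2 * n), doublingMap n (X j) =
        (X (⟨j.val / 2, by omega⟩ : Fin n) : MvPolynomial (Fin n) ℚ) := fun j => by
      simp [doublingMap]
    simp only [AlgHom.coe_toRingHom, this]
    rw [doubling_prod n]
  rw [key, Polynomial.coeff_mul]
  set S := (Finset.HasAntidiagonal.antidiagonal (2 * n - k) : Finset (ℕ × ℕ)) with hS
  have hp : ((n, n - k) : ℕ × ℕ) ∈ S := by simp [hS]; omega
  have hq : ((n - k, n) : ℕ × ℕ) ∈ S.erase (n, n - k) := by
    simp [hS, Finset.mem_erase]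
    constructor
    · intro h; omega
    · omega
  rw [← Finset.add_sum_erase _ _ hp, ← Finset.add_sum_erase _ _ hq]
  have hfp : P.coeff n * P.coeff (n - k) = esymm (Fin n) ℚ k := by
    rw [hPcoeff n le_rfl, hPcoeff (n - k) (by omega), Nat.sub_self, esymm_zero,
      one_mul]
    congr 1
    omega
  have hfq : P.coeff (n - k) * P.coeff n = esymm (Fin n) ℚ k := by
    rw [mul_comm]; exact hfp
  rw [hfp, hfq]
  have hrw : esymm (Fin n) ℚ k + (esymm (Fin n) ℚ k +
      ∑ x ∈ (S.erase (n, n - k)).erase (n - k, n), P.coeff x.1 * P.coeff x.2) -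
      (2 : ℚ) • esymm (Fin n) ℚ k =
      ∑ x ∈ (S.erase (n, n - k)).erase (n - k, n), P.coeff x.1 * P.coeff x.2 := by
    rw [two_smul]; ring
  rw [hrw]
  refine Subalgebra.sum_mem A fun x hx => ?_
  obtain ⟨a, b⟩ := x
  have hxq : (a, b) ≠ ((n - k : ℕ), (n : ℕ)) := (Finset.mem_erase.mp hx).1
  have hxp : (a, b) ≠ ((n : ℕ), (n - k : ℕ)) :=
    (Finset.mem_erase.mp (Finset.mem_erase.mp hx).2).1
  have hab : a + b = 2 * n - k := by
    have := (Finset.mem_erase.mp (Finset.mem_erase.mp hx).2).2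
    simpa [hS] using this
  rcases lt_or_ge n a with h | ha
  · rw [hPcoeff0 a h, zero_mul]; exact Subalgebra.zero_mem A
  rcases lt_or_ge n b with h | hb
  · rw [hPcoeff0 b h, mul_zero]; exact Subalgebra.zero_mem A
  have ha' : a ≠ n := fun h => hxp (by simp [h]; omega)
  have hb' : b ≠ n := fun h => hxq (by simp [h]; omega)
  rw [hPcoeff a ha, hPcoeff b hb]
  exact Subalgebra.mul_mem A (hmem _ (by omega) (by omega)) (hmem _ (by omega) (by omega))
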